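/- Let g ∈ L¹(ℝ) and y₀ ≠ 0. If ∫_ℝ e^{−iπ x cosh t} g(t) dt = 0 for all x ∈ ℝ and ∫_ℝ e^{−iπ(x cosh t + y₀ sinh t)} g(t) dt = 0 for all x ∈ ℝ, then g = 0 a.e. (The pair (hyperbola, two distinct lines parallel to the X-axis) is a Heisenberg uniqueness pair.) -/

import Mathlib

set_option maxHeartbeats 1000000

open MeasureTheory Real FourierTransform
open scoped ContDiff

noncomputable def toSchwartz (g : ℝ → ℂ) (hsm : ContDiff ℝ ∞ g) (hsupp : HasCompactSupport g) :
    SchwartzMap ℝ ℂ where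
  toFun := g
  smooth' := hsm
  decay' := by
    intro k n
    set F : ℝ → ℝ := fun x => ‖x‖ ^ k * ‖iteratedFDeriv ℝ n g x‖ with hF
    have h2 : Continuous F :=
      (continuous_norm.pow k).mul (hsm.continuous_iteratedFDeriv (by exact_mod_cast le_top)).norm
    have h1 : HasCompactSupport F :=
      ((hsupp.iteratedFDeriv n).norm).mul_left
    obtain ⟨C, hC⟩ := h2.bounded_above_of_compact_support h1
    exact ⟨C, fun x => (le_abs_self _).trans (by simpa [hF, Real.norm_eq_abs] using hC x)⟩

lemma fourier_l1_injective {f : ℝ → ℂ} (hf : Integrable f) (h0 : ∀ ξ : ℝ, 𝓕 f ξ = 0) :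
    f =ᵐ[volume] (0 : ℝ → ℂ) := by
  apply ae_eq_zero_of_integral_contDiff_smul_eq_zero hf.locallyIntegrable
  intro g gsm gsupp
  have Gsm : ContDiff ℝ ∞ (fun x => (g x : ℂ)) := Complex.ofRealCLM.contDiff.comp gsm
  have Gsupp : HasCompactSupport (fun x => (g x : ℂ)) :=
    gsupp.comp_left (g := fun r : ℝ => (r : ℂ)) rfl
  set Φ : SchwartzMap ℝ ℂ := toSchwartz _ Gsm Gsupp with hΦ
  set φ := (SchwartzMap.fourierTransformCLE ℂ (SchwartzMap ℝ ℂ)).symm Φ with hφdef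
  have hφ : 𝓕 ⇑φ = ⇑Φ := by
    have h1 : ⇑((SchwartzMap.fourierTransformCLE ℂ (SchwartzMap ℝ ℂ)) φ) = 𝓕 ⇑φ := by
      rfl
    rw [← h1, hφdef, (SchwartzMap.fourierTransformCLE ℂ (SchwartzMap ℝ ℂ)).apply_symm_apply]
  have hflip : (innerₗ ℝ).flip = innerₗ ℝ := by
    apply LinearMap.ext; intro x; apply LinearMap.ext; intro y
    exact real_inner_comm x y
  have mult := VectorFourier.integral_fourierIntegral_smul_eq_flip (L := innerₗ ℝ)
    Real.continuous_fourierChar continuous_inner (φ.integrable (μ := volume)) hf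
  rw [hflip] at mult
  have lhs : ∫ x : ℝ, g x • f x = ∫ ξ : ℝ,
      (VectorFourier.fourierIntegral 𝐞 volume (innerₗ ℝ) ⇑φ ξ) • f ξ := by
    apply integral_congr_ae
    filter_upwards with x
    have : VectorFourier.fourierIntegral 𝐞 volume (innerₗ ℝ) ⇑φ x = 𝓕 ⇑φ x := rfl
    rw [this, hφ]
    show g x • f x = (g x : ℂ) • f x
    simp [Complex.real_smul]
  rw [lhs, mult]
  have hz : ∀ x : ℝ, φ x • VectorFourier.fourierIntegral 𝐞 volume (innerₗ ℝ) f x = 0 := by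
    intro x
    rw [show VectorFourier.fourierIntegral 𝐞 volume (innerₗ ℝ) f x = 0 from h0 x, smul_zero]
  simp only [hz, integral_zero]


noncomputable def acosh (u : ℝ) : ℝ := Real.arsinh (Real.sqrt (u ^ 2 - 1))

lemma sqrt_cosh_sq_sub_one {t : ℝ} (ht : 0 ≤ t) :
    Real.sqrt (Real.cosh t ^ 2 - 1) = Real.sinh t := by
  rw [Real.cosh_sq, add_sub_cancel_right, Real.sqrt_sq (Real.sinh_nonneg_iff.2 ht)]

lemma acosh_cosh {t : ℝ} (ht : 0 ≤ t) : acosh (Real.cosh t) = t := by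
  rw [acosh, sqrt_cosh_sq_sub_one ht, Real.arsinh_sinh]

lemma cosh_acosh {u : ℝ} (hu : 1 ≤ u) : Real.cosh (acosh u) = u := by
  rw [acosh, Real.cosh_arsinh, Real.sq_sqrt (by nlinarith), show 1 + (u ^ 2 - 1) = u ^ 2 by ring,
    Real.sqrt_sq (by linarith)]

lemma cosh_injOn : Set.InjOn Real.cosh (Set.Ioi (0 : ℝ)) := by
  intro a ha b hb hab
  have := congrArg acosh hab
  rwa [acosh_cosh (le_of_lt ha), acosh_cosh (le_of_lt hb)] at this

lemma image_cosh_Ioi : Real.cosh '' Set.Ioi (0 : ℝ) = Set.Ioi (1 : ℝ) := by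
  ext u
  constructor
  · rintro ⟨t, ht, rfl⟩
    exact Real.one_lt_cosh.2 (ne_of_gt ht)
  · intro hu
    refine ⟨acosh u, ?_, cosh_acosh (le_of_lt hu)⟩
    rw [acosh, Set.mem_Ioi, Real.arsinh_pos_iff]
    exact Real.sqrt_pos.2 (by nlinarith [Set.mem_Ioi.1 hu])

lemma cov {F : Type*} [NormedAddCommGroup F] [NormedSpace ℝ F] (G : ℝ → F) :
    ∫ u in Set.Ioi (1 : ℝ), G u
      = ∫ t in Set.Ioi (0 : ℝ), |Real.sinh t| • G (Real.cosh t) := by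
  rw [← image_cosh_Ioi]
  exact integral_image_eq_integral_abs_deriv_smul measurableSet_Ioi
    (fun x _ => (Real.hasDerivAt_cosh x).hasDerivWithinAt) cosh_injOn G

lemma cov_int {F : Type*} [NormedAddCommGroup F] [NormedSpace ℝ F] (G : ℝ → F) :
    IntegrableOn G (Set.Ioi (1 : ℝ))
      ↔ IntegrableOn (fun t => |Real.sinh t| • G (Real.cosh t)) (Set.Ioi (0 : ℝ)) := by
  rw [← image_cosh_Ioi]
  exact integrableOn_image_iff_integrableOn_abs_deriv_smul measurableSet_Ioi
    (fun x _ => (Real.hasDerivAt_cosh x).hasDerivWithinAt) cosh_injOn G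

lemma half_of_even {F : ℝ → ℂ} (hF : Integrable F) (he : ∀ t, F (-t) = F t)
    (h0 : ∫ t, F t = 0) : ∫ t in Set.Ioi (0 : ℝ), F t = 0 := by
  have e1 : ∫ t in Set.Iic (0 : ℝ), F t = ∫ t in Set.Ioi (0 : ℝ), F t := by
    rw [show (Set.Iic (0 : ℝ)) = Set.Iic (-0 : ℝ) by rw [neg_zero], ← integral_comp_neg_Ioi]
    exact setIntegral_congr_fun measurableSet_Ioi (fun t _ => he t)
  have e2 : (∫ t in Set.Iic (0 : ℝ), F t) + ∫ t in Set.Ioi (0 : ℝ), F t = ∫ t, F t :=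
    intervalIntegral.integral_Iic_add_Ioi hF.integrableOn hF.integrableOn
  rw [h0, e1, add_self_eq_zero] at e2
  exact e2

lemma half_norm_of_even {F : ℝ → ℝ} (hF : Integrable F) (he : ∀ t, F (-t) = F t) :
    ∫ t in Set.Iic (0 : ℝ), F t = ∫ t in Set.Ioi (0 : ℝ), F t := by
  rw [show (Set.Iic (0 : ℝ)) = Set.Iic (-0 : ℝ) by rw [neg_zero], ← integral_comp_neg_Ioi]
  exact setIntegral_congr_fun measurableSet_Ioi (fun t _ => he t)

lemma key_even {h : ℝ → ℂ} (hi : Integrable h) (he : ∀ t, h (-t) = h t)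
    (hv : ∀ x : ℝ, ∫ t : ℝ,
      Complex.exp (-(Complex.I * (Real.pi : ℂ) * (x : ℂ) * (Real.cosh t : ℂ))) * h t = 0) :
    h =ᵐ[volume] (0 : ℝ → ℂ) := by
  have hnorm : ∀ (x r : ℝ),
      ‖Complex.exp (-(Complex.I * (Real.pi : ℂ) * (x : ℂ) * (r : ℂ)))‖ = 1 := by
    intro x r
    rw [show -(Complex.I * (Real.pi : ℂ) * (x : ℂ) * (r : ℂ))
        = ((-(Real.pi * x * r) : ℝ) : ℂ) * Complex.I by push_cast; ring]
    exact Complex.norm_exp_ofReal_mul_I _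
  have hcont : ∀ x : ℝ, Continuous fun t : ℝ =>
      Complex.exp (-(Complex.I * (Real.pi : ℂ) * (x : ℂ) * (Real.cosh t : ℂ))) := by
    intro x; fun_prop
  have Fint : ∀ x : ℝ, Integrable (fun t =>
      Complex.exp (-(Complex.I * (Real.pi : ℂ) * (x : ℂ) * (Real.cosh t : ℂ))) * h t) :=
    fun x => hi.bdd_mul ((hcont x).aestronglyMeasurable) (ae_of_all _ fun t => le_of_eq (hnorm x _))
  have half : ∀ x : ℝ, ∫ t in Set.Ioi (0 : ℝ),
      Complex.exp (-(Complex.I * (Real.pi : ℂ) * (x : ℂ) * (Real.cosh t : ℂ))) * h t = 0 := by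
    intro x
    refine half_of_even (Fint x) (fun t => ?_) (hv x)
    simp only [Real.cosh_neg, he]
  set H : ℝ → ℂ :=
    Set.indicator (Set.Ioi 1) (fun u => (Real.sqrt (u ^ 2 - 1))⁻¹ • h (acosh u)) with hHdef
  have hHcosh : ∀ t ∈ Set.Ioi (0 : ℝ), H (Real.cosh t) = (Real.sinh t)⁻¹ • h t := by
    intro t ht
    rw [Set.mem_Ioi] at ht
    have h1 : Real.cosh t ∈ Set.Ioi (1 : ℝ) := Real.one_lt_cosh.2 (ne_of_gt ht)
    rw [hHdef, Set.indicator_of_mem h1, sqrt_cosh_sq_sub_one (le_of_lt ht),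
      acosh_cosh (le_of_lt ht)]
  have hsinh_smul : ∀ t ∈ Set.Ioi (0 : ℝ), ∀ z : ℂ,
      |Real.sinh t| • ((Real.sinh t)⁻¹ • z) = z := by
    intro t ht z
    rw [Set.mem_Ioi] at ht
    have hs : 0 < Real.sinh t := Real.sinh_pos_iff.2 ht
    rw [abs_of_pos hs, smul_smul, mul_inv_cancel₀ (ne_of_gt hs), one_smul]
  have Hint : Integrable H := by
    rw [hHdef, integrable_indicator_iff measurableSet_Ioi]
    have step : IntegrableOn (Set.indicator (Set.Ioi 1)
        (fun u => (Real.sqrt (u ^ 2 - 1))⁻¹ • h (acosh u))) (Set.Ioi 1) := by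
      rw [cov_int]
      apply (hi.integrableOn (s := Set.Ioi 0)).congr_fun _ measurableSet_Ioi
      intro t ht
      show h t = |Real.sinh t| • H (Real.cosh t)
      rw [hHcosh t ht, hsinh_smul t ht]
    exact step.congr_fun (fun u hu => by rw [Set.indicator_of_mem hu]) measurableSet_Ioi
  have hFour : ∀ ξ : ℝ, 𝓕 H ξ = 0 := by
    intro ξ
    rw [Real.fourier_real_eq]
    have e0 : ∫ v : ℝ, 𝐞 (-(v * ξ)) • H v
        = ∫ v in Set.Ioi (1 : ℝ), 𝐞 (-(v * ξ)) • H v := by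
      rw [← integral_indicator measurableSet_Ioi]
      congr 1
      funext v
      by_cases hv1 : v ∈ Set.Ioi (1 : ℝ)
      · rw [Set.indicator_of_mem hv1]
      · rw [Set.indicator_of_notMem hv1, hHdef, Set.indicator_of_notMem hv1, smul_zero]
    rw [e0, cov (fun u => 𝐞 (-(u * ξ)) • H u)]
    have e1 : ∫ t in Set.Ioi (0 : ℝ), |Real.sinh t| • (𝐞 (-(Real.cosh t * ξ)) • H (Real.cosh t))
        = ∫ t in Set.Ioi (0 : ℝ), Complex.exp (-(Complex.I * (Real.pi : ℂ)
            * ((2 * ξ : ℝ) : ℂ) * (Real.cosh t : ℂ))) * h t := by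
      apply setIntegral_congr_fun measurableSet_Ioi
      intro t ht
      show |Real.sinh t| • (𝐞 (-(Real.cosh t * ξ)) : Circle) • H (Real.cosh t)
          = Complex.exp (-(Complex.I * (Real.pi : ℂ) * ((2 * ξ : ℝ) : ℂ) * (Real.cosh t : ℂ))) * h t
      rw [hHcosh t ht, Circle.smul_def, Real.fourierChar_apply,
        smul_comm (|Real.sinh t|), hsinh_smul t ht, smul_eq_mul]
      congr 1
      push_cast
      ring
    rw [e1, half (2 * ξ)]
  have hH0 : H =ᵐ[volume] 0 := fourier_l1_injective Hint hFour
  have hnormint : ∫ u in Set.Ioi (1 : ℝ), ‖H u‖ = ∫ t in Set.Ioi (0 : ℝ), ‖h t‖ := by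
    rw [cov (fun u => ‖H u‖)]
    apply setIntegral_congr_fun measurableSet_Ioi
    intro t ht
    have hs : Real.sinh t ≠ 0 := ne_of_gt (Real.sinh_pos_iff.2 (Set.mem_Ioi.1 ht))
    show |Real.sinh t| • ‖H (Real.cosh t)‖ = ‖h t‖
    rw [hHcosh t ht, norm_smul, Real.norm_eq_abs, abs_inv, smul_eq_mul, ← mul_assoc,
      mul_inv_cancel₀ (abs_ne_zero.2 hs), one_mul]
  have hHnorm0 : ∫ u in Set.Ioi (1 : ℝ), ‖H u‖ = 0 := by
    have hz : (fun u => ‖H u‖) =ᵐ[volume.restrict (Set.Ioi 1)] 0 :=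
      (ae_restrict_of_ae hH0).mono (fun u hu => by simp [hu])
    rw [integral_congr_ae hz]
    simp
  have hIoi : ∀ᵐ t ∂volume.restrict (Set.Ioi (0 : ℝ)), h t = 0 := by
    have hnn : 0 ≤ᵐ[volume.restrict (Set.Ioi (0 : ℝ))] fun t => ‖h t‖ :=
      ae_of_all _ fun t => norm_nonneg _
    have hint : Integrable (fun t => ‖h t‖) (volume.restrict (Set.Ioi 0)) := hi.norm.integrableOn
    have hz : ∫ t in Set.Ioi (0 : ℝ), ‖h t‖ = 0 := by rw [← hnormint, hHnorm0]
    have := (integral_eq_zero_iff_of_nonneg_ae hnn hint).mp hz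
    exact this.mono fun t ht => norm_eq_zero.mp (by simpa using ht)
  have hIic : ∀ᵐ t ∂volume.restrict (Set.Iic (0 : ℝ)), h t = 0 := by
    have hnn : 0 ≤ᵐ[volume.restrict (Set.Iic (0 : ℝ))] fun t => ‖h t‖ :=
      ae_of_all _ fun t => norm_nonneg _
    have hint : Integrable (fun t => ‖h t‖) (volume.restrict (Set.Iic 0)) := hi.norm.integrableOn
    have heq : ∫ t in Set.Iic (0 : ℝ), ‖h t‖ = ∫ t in Set.Ioi (0 : ℝ), ‖h t‖ :=
      half_norm_of_even hi.norm (fun t => by rw [he])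
    have hz : ∫ t in Set.Iic (0 : ℝ), ‖h t‖ = 0 := by rw [heq, ← hnormint, hHnorm0]
    have := (integral_eq_zero_iff_of_nonneg_ae hnn hint).mp hz
    exact this.mono fun t ht => norm_eq_zero.mp (by simpa using ht)
  have A := (ae_restrict_iff' measurableSet_Ioi).mp hIoi
  have B := (ae_restrict_iff' measurableSet_Iic).mp hIic
  filter_upwards [A, B] with t hA hB
  rcases le_or_gt t 0 with ht | ht
  · exact hB ht
  · exact hA ht


lemma sin_zero_set_null (y₀ : ℝ) (hy₀ : y₀ ≠ 0) :
    volume {t : ℝ | Real.sin (Real.pi * y₀ * Real.sinh t) = 0} = 0 := by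
  have hsub : {t : ℝ | Real.sin (Real.pi * y₀ * Real.sinh t) = 0}
      ⊆ Set.range (fun k : ℤ => Real.arsinh (k / y₀)) := by
    intro t ht
    obtain ⟨n, hn⟩ := Real.sin_eq_zero_iff.1 ht
    refine ⟨n, ?_⟩
    have hn' : Real.pi * (n : ℝ) = Real.pi * (y₀ * Real.sinh t) := by
      rw [← mul_assoc]; linarith [hn]
    have h1 := mul_left_cancel₀ Real.pi_ne_zero hn'
    have h2 : Real.sinh t = (n : ℝ) / y₀ := by
      rw [eq_div_iff hy₀]; linarith [h1]
    show Real.arsinh ((n : ℝ) / y₀) = t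
    rw [← h2, Real.arsinh_sinh]
  exact measure_mono_null hsub
    ((Set.countable_range fun k : ℤ => Real.arsinh (k / y₀)).measure_zero volume)

/-- The hyperbola `{(cosh t, sinh t) : t ∈ ℝ}` together with two distinct lines parallel to
the `X`-axis (`y = 0` and `y = y₀`, `y₀ ≠ 0`) is a Heisenberg uniqueness pair: if the Fourier
transform of `g(t)dt` on the hyperbola vanishes on both lines, then `g = 0` a.e. -/
theorem hyperbola_two_horizontal_lines_HUP (g : ℝ → ℂ) (hg : Integrable g)
    (y₀ : ℝ) (hy₀ : y₀ ≠ 0)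
    (h1 : ∀ x : ℝ,
      ∫ t : ℝ, Complex.exp (-(Complex.I * (Real.pi : ℂ) * (x : ℂ) * (Real.cosh t : ℂ)))
        * g t = 0)
    (h2 : ∀ x : ℝ,
      ∫ t : ℝ, Complex.exp (-(Complex.I * (Real.pi : ℂ)
        * ((x : ℂ) * (Real.cosh t : ℂ) + (y₀ : ℂ) * (Real.sinh t : ℂ)))) * g t = 0) :
    g =ᵐ[volume] 0 := by
  have negint : ∀ F : ℝ → ℂ, ∫ t : ℝ, F (-t) = ∫ t : ℝ, F t := fun F =>
    MeasurePreserving.integral_comp (Measure.measurePreserving_neg volume)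
      (Homeomorph.neg ℝ).measurableEmbedding F
  have gneg : Integrable (fun t => g (-t)) :=
    ((Measure.measurePreserving_neg volume).integrable_comp_emb
      (Homeomorph.neg ℝ).measurableEmbedding).2 hg
  have hunit : ∀ z : ℂ, z.re = 0 → ‖Complex.exp z‖ = 1 := by
    intro z hz
    rw [Complex.norm_exp, hz, Real.exp_zero]
  have hre : ∀ (a b : ℝ), (Complex.I * (a : ℂ) * (b : ℂ)).re = 0 := by
    intro a b; simp
  -- unimodular norms
  have n1 : ∀ (x r : ℝ), ‖Complex.exp (-(Complex.I * (Real.pi : ℂ) * (x : ℂ) * (r : ℂ)))‖ = 1 := by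
    intro x r
    apply hunit; simp
  have n2 : ∀ (x r : ℝ), ‖Complex.exp (Complex.I * (Real.pi : ℂ) * (x : ℂ) * (r : ℂ))‖ = 1 := by
    intro x r
    apply hunit; simp
  -- integrability helpers
  have bint : ∀ (c : ℝ → ℂ) (hc : Continuous c) (hcn : ∀ t, ‖c t‖ = 1) (f : ℝ → ℂ)
      (hf : Integrable f), Integrable (fun t => c t * f t) := fun c hc hcn f hf =>
    hf.bdd_mul hc.aestronglyMeasurable (ae_of_all _ fun t => le_of_eq (hcn t))
  -- the two even combinations
  set h₁ : ℝ → ℂ := fun t => g t + g (-t) with hh₁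
  set h₂ : ℝ → ℂ := fun t =>
    Complex.exp (-(Complex.I * (Real.pi : ℂ) * (y₀ : ℂ) * (Real.sinh t : ℂ))) * g t
      + Complex.exp (Complex.I * (Real.pi : ℂ) * (y₀ : ℂ) * (Real.sinh t : ℂ)) * g (-t) with hh₂
  have c1 : Continuous fun t : ℝ =>
      Complex.exp (-(Complex.I * (Real.pi : ℂ) * (y₀ : ℂ) * (Real.sinh t : ℂ))) := by fun_prop
  have c2 : Continuous fun t : ℝ =>
      Complex.exp (Complex.I * (Real.pi : ℂ) * (y₀ : ℂ) * (Real.sinh t : ℂ)) := by fun_prop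
  have ih₁ : Integrable h₁ := hg.add gneg
  have ih₂ : Integrable h₂ :=
    (bint _ c1 (fun t => n1 y₀ _) g hg).add (bint _ c2 (fun t => n2 y₀ _) _ gneg)
  -- evenness
  have e₁ : ∀ t, h₁ (-t) = h₁ t := by
    intro t; simp only [hh₁, neg_neg]; ring
  have e₂ : ∀ t, h₂ (-t) = h₂ t := by
    intro t
    simp only [hh₂, neg_neg, Real.sinh_neg, Complex.ofReal_neg]
    ring_nf
  -- vanishing of transforms
  have ec : ∀ (x : ℝ), Continuous fun t : ℝ =>
      Complex.exp (-(Complex.I * (Real.pi : ℂ) * (x : ℂ) * (Real.cosh t : ℂ))) := by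
    intro x; fun_prop
  have v₁ : ∀ x : ℝ, ∫ t : ℝ,
      Complex.exp (-(Complex.I * (Real.pi : ℂ) * (x : ℂ) * (Real.cosh t : ℂ))) * h₁ t = 0 := by
    intro x
    have i1 := bint _ (ec x) (fun t => n1 x _) g hg
    have i2 := bint _ (ec x) (fun t => n1 x _) _ gneg
    have split : ∫ t : ℝ,
        Complex.exp (-(Complex.I * (Real.pi : ℂ) * (x : ℂ) * (Real.cosh t : ℂ))) * h₁ t
        = (∫ t : ℝ, Complex.exp (-(Complex.I * (Real.pi : ℂ) * (x : ℂ) * (Real.cosh t : ℂ))) * g t)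
          + ∫ t : ℝ, Complex.exp (-(Complex.I * (Real.pi : ℂ) * (x : ℂ) * (Real.cosh t : ℂ)))
              * g (-t) := by
      rw [← integral_add i1 i2]
      congr 1; funext t; simp only [hh₁]; ring
    have swap : ∫ t : ℝ, Complex.exp (-(Complex.I * (Real.pi : ℂ) * (x : ℂ) * (Real.cosh t : ℂ)))
        * g (-t) = ∫ t : ℝ,
          Complex.exp (-(Complex.I * (Real.pi : ℂ) * (x : ℂ) * (Real.cosh t : ℂ))) * g t := by
      calc ∫ t : ℝ, Complex.exp (-(Complex.I * (Real.pi : ℂ) * (x : ℂ) * (Real.cosh t : ℂ)))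
              * g (-t)
          = ∫ t : ℝ, (fun s => Complex.exp (-(Complex.I * (Real.pi : ℂ) * (x : ℂ)
              * (Real.cosh s : ℂ))) * g s) (-t) := by
            congr 1; funext t
            show _ = Complex.exp (-(Complex.I * (Real.pi : ℂ) * (x : ℂ) * (Real.cosh (-t) : ℂ)))
              * g (-t)
            rw [Real.cosh_neg]
        _ = _ := negint (fun s => Complex.exp (-(Complex.I * (Real.pi : ℂ) * (x : ℂ)
              * (Real.cosh s : ℂ))) * g s)
    rw [split, swap, h1 x, add_zero]
  have v₂ : ∀ x : ℝ, ∫ t : ℝ,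
      Complex.exp (-(Complex.I * (Real.pi : ℂ) * (x : ℂ) * (Real.cosh t : ℂ))) * h₂ t = 0 := by
    intro x
    have base : ∫ t : ℝ,
        Complex.exp (-(Complex.I * (Real.pi : ℂ) * (x : ℂ) * (Real.cosh t : ℂ)))
          * (Complex.exp (-(Complex.I * (Real.pi : ℂ) * (y₀ : ℂ) * (Real.sinh t : ℂ))) * g t)
        = 0 := by
      rw [← h2 x]
      congr 1; funext t
      rw [← mul_assoc, ← Complex.exp_add]
      congr 2
      ring
    have i1 := bint _ ((ec x).mul c1) (fun t => by
        rw [Pi.mul_apply, norm_mul, n1 x _, n1 y₀ _, mul_one]) g hg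
    have i2 := bint _ ((ec x).mul c2) (fun t => by
        rw [Pi.mul_apply, norm_mul, n1 x _, n2 y₀ _, mul_one]) _ gneg
    have swap : ∫ t : ℝ, Complex.exp (-(Complex.I * (Real.pi : ℂ) * (x : ℂ) * (Real.cosh t : ℂ)))
          * (Complex.exp (Complex.I * (Real.pi : ℂ) * (y₀ : ℂ) * (Real.sinh t : ℂ)) * g (-t))
        = ∫ t : ℝ, Complex.exp (-(Complex.I * (Real.pi : ℂ) * (x : ℂ) * (Real.cosh t : ℂ)))
          * (Complex.exp (-(Complex.I * (Real.pi : ℂ) * (y₀ : ℂ) * (Real.sinh t : ℂ))) * g t) := by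
      calc ∫ t : ℝ, Complex.exp (-(Complex.I * (Real.pi : ℂ) * (x : ℂ) * (Real.cosh t : ℂ)))
              * (Complex.exp (Complex.I * (Real.pi : ℂ) * (y₀ : ℂ) * (Real.sinh t : ℂ)) * g (-t))
          = ∫ t : ℝ, (fun s => Complex.exp (-(Complex.I * (Real.pi : ℂ) * (x : ℂ)
              * (Real.cosh s : ℂ)))
              * (Complex.exp (-(Complex.I * (Real.pi : ℂ) * (y₀ : ℂ) * (Real.sinh s : ℂ)))
                * g s)) (-t) := by
            congr 1; funext t
            show _ = Complex.exp (-(Complex.I * (Real.pi : ℂ) * (x : ℂ) * (Real.cosh (-t) : ℂ)))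
              * (Complex.exp (-(Complex.I * (Real.pi : ℂ) * (y₀ : ℂ) * (Real.sinh (-t) : ℂ)))
                * g (-t))
            rw [Real.cosh_neg, Real.sinh_neg]
            push_cast
            ring_nf
        _ = _ := negint (fun s => Complex.exp (-(Complex.I * (Real.pi : ℂ) * (x : ℂ)
              * (Real.cosh s : ℂ)))
              * (Complex.exp (-(Complex.I * (Real.pi : ℂ) * (y₀ : ℂ) * (Real.sinh s : ℂ)))
                * g s))
    have split : ∫ t : ℝ,
        Complex.exp (-(Complex.I * (Real.pi : ℂ) * (x : ℂ) * (Real.cosh t : ℂ))) * h₂ t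
        = (∫ t : ℝ, Complex.exp (-(Complex.I * (Real.pi : ℂ) * (x : ℂ) * (Real.cosh t : ℂ)))
            * (Complex.exp (-(Complex.I * (Real.pi : ℂ) * (y₀ : ℂ) * (Real.sinh t : ℂ))) * g t))
          + ∫ t : ℝ, Complex.exp (-(Complex.I * (Real.pi : ℂ) * (x : ℂ) * (Real.cosh t : ℂ)))
            * (Complex.exp (Complex.I * (Real.pi : ℂ) * (y₀ : ℂ) * (Real.sinh t : ℂ)) * g (-t)) := by
      rw [← integral_add (by simpa [mul_assoc] using i1) (by simpa [mul_assoc] using i2)]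
      congr 1; funext t; simp only [hh₂]; ring
    rw [split, swap, base, add_zero]
  -- apply the key lemma
  have z₁ := key_even ih₁ e₁ v₁
  have z₂ := key_even ih₂ e₂ v₂
  have hZ : ∀ᵐ t : ℝ, Real.sin (Real.pi * y₀ * Real.sinh t) ≠ 0 :=
    measure_eq_zero_iff_ae_notMem.1 (sin_zero_set_null y₀ hy₀)
  filter_upwards [z₁, z₂, hZ] with t ht₁ ht₂ htZ
  have ht₁' : g t + g (-t) = 0 := by simpa [hh₁] using ht₁
  have ht₂' : Complex.exp (-(Complex.I * (Real.pi : ℂ) * (y₀ : ℂ) * (Real.sinh t : ℂ))) * g t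
      + Complex.exp (Complex.I * (Real.pi : ℂ) * (y₀ : ℂ) * (Real.sinh t : ℂ)) * g (-t) = 0 := by
    simpa [hh₂] using ht₂
  have hgneg : g (-t) = -g t := by linear_combination ht₁'
  rw [hgneg] at ht₂'
  have hfac : (Complex.exp (-(Complex.I * (Real.pi : ℂ) * (y₀ : ℂ) * (Real.sinh t : ℂ)))
      - Complex.exp (Complex.I * (Real.pi : ℂ) * (y₀ : ℂ) * (Real.sinh t : ℂ))) * g t = 0 := by
    linear_combination ht₂'
  have hdiff : Complex.exp (-(Complex.I * (Real.pi : ℂ) * (y₀ : ℂ) * (Real.sinh t : ℂ)))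
      - Complex.exp (Complex.I * (Real.pi : ℂ) * (y₀ : ℂ) * (Real.sinh t : ℂ))
      = -2 * (Real.sin (Real.pi * y₀ * Real.sinh t) : ℂ) * Complex.I := by
    rw [show -(Complex.I * (Real.pi : ℂ) * (y₀ : ℂ) * (Real.sinh t : ℂ))
        = ((-(Real.pi * y₀ * Real.sinh t) : ℝ) : ℂ) * Complex.I by push_cast; ring,
      show Complex.I * (Real.pi : ℂ) * (y₀ : ℂ) * (Real.sinh t : ℂ)
        = ((Real.pi * y₀ * Real.sinh t : ℝ) : ℂ) * Complex.I by push_cast; ring,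
      Complex.exp_mul_I, Complex.exp_mul_I]
    push_cast [Complex.cos_neg, Complex.sin_neg]
    ring
  rw [hdiff] at hfac
  have hne : (-2 * (Real.sin (Real.pi * y₀ * Real.sinh t) : ℂ) * Complex.I) ≠ 0 :=
    mul_ne_zero (mul_ne_zero (by norm_num) (by exact_mod_cast htZ)) Complex.I_ne_zero
  have := (mul_eq_zero.1 hfac).resolve_left hne
  simpa using this
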